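/- Let N ≥ 1 and f : ℝ → ℝ continuous with primitive F(t) = ∫₀ᵗ f. Assume: (f1) f(t)/|t|^{1+4/N} → 0 as t → 0; (f3) F(t)/|t|^{2+4/N} → +∞ as |t| → ∞; (f4) t ↦ (f(t)t − 2F(t))/|t|^{2+4/N} is strictly decreasing on (−∞,0) and strictly increasing on (0,∞). Then f(t)·t > (2 + 4/N)·F(t) > 0 for all t ≠ 0. -/

import Mathlib

open Filter Set

theorem aux_pos (c : ℝ) (hc : 0 < c) (f : ℝ → ℝ) (hf : Continuous f)
    (F : ℝ → ℝ) (hF : ∀ t, F t = ∫ τ in (0:ℝ)..t, f τ)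
    (hf1 : Tendsto (fun t => f t / |t| ^ (1 + c)) (nhdsWithin 0 {(0:ℝ)}ᶜ) (nhds 0))
    (hf4 : StrictMonoOn (fun t => (f t * t - 2 * F t) / |t| ^ (2 + c)) (Ioi 0)) :
    ∀ t : ℝ, 0 < t → 0 < F t ∧ (2 + c) * F t < f t * t := by
  set g : ℝ → ℝ := fun t => (f t * t - 2 * F t) / |t| ^ (2 + c) with hg
  -- eventual bound on f near 0+
  have hfb : ∀ ε : ℝ, 0 < ε → ∃ δ > 0, ∀ τ : ℝ, 0 < τ → τ < δ → |f τ| ≤ ε * τ ^ (1 + c) := by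
    intro ε hε
    rw [Metric.tendsto_nhdsWithin_nhds] at hf1
    obtain ⟨δ, hδ, hδ'⟩ := hf1 ε hε
    refine ⟨δ, hδ, fun τ hτ hτδ => ?_⟩
    have h1 : τ ∈ ({(0:ℝ)}ᶜ : Set ℝ) := by simp [hτ.ne']
    have h2 : dist τ 0 < δ := by rw [Real.dist_eq, sub_zero, abs_of_pos hτ]; exact hτδ
    have h3 := hδ' h1 h2
    rw [Real.dist_eq, sub_zero] at h3
    have hpow : (0:ℝ) < |τ| ^ (1 + c) := Real.rpow_pos_of_pos (abs_pos.mpr hτ.ne') _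
    rw [abs_div, abs_of_pos hpow, div_lt_iff₀ hpow] at h3
    rw [abs_of_pos hτ] at h3
    linarith
  -- bound on F near 0+
  have hFb : ∀ ε : ℝ, 0 < ε → ∃ δ > 0, ∀ a : ℝ, 0 < a → a < δ → |F a| ≤ ε * a ^ (2 + c) := by
    intro ε hε
    obtain ⟨δ, hδ, hb⟩ := hfb ε hε
    refine ⟨δ, hδ, fun a ha haδ => ?_⟩
    have key : ∀ τ ∈ Set.uIoc (0:ℝ) a, ‖f τ‖ ≤ ε * a ^ (1 + c) := by
      intro τ hτ
      rw [Set.uIoc_of_le ha.le] at hτ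
      calc ‖f τ‖ ≤ ε * τ ^ (1 + c) := hb τ hτ.1 (lt_of_le_of_lt hτ.2 haδ)
        _ ≤ ε * a ^ (1 + c) := by
            have := Real.rpow_le_rpow hτ.1.le hτ.2 (by linarith : (0:ℝ) ≤ 1 + c)
            nlinarith
    have hb2 := intervalIntegral.norm_integral_le_of_norm_le_const key
    rw [hF a]
    calc ‖∫ τ in (0:ℝ)..a, f τ‖ ≤ ε * a ^ (1 + c) * |a - 0| := hb2
      _ = ε * a ^ (2 + c) := by
          rw [sub_zero, abs_of_pos ha, mul_assoc, ← Real.rpow_add_one ha.ne',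
            show (1 + c + 1) = 2 + c by ring]
  -- F a / a^(2+c) → 0 along 0+
  have hFα : Tendsto (fun a => F a / a ^ (2 + c)) (nhdsWithin 0 (Ioi 0)) (nhds 0) := by
    rw [Metric.tendsto_nhdsWithin_nhds]
    intro ε hε
    obtain ⟨δ, hδ, hb⟩ := hFb (ε / 2) (by linarith)
    refine ⟨δ, hδ, ?_⟩
    intro a ha hd
    have ha : (0:ℝ) < a := ha
    rw [Real.dist_eq, sub_zero, abs_of_pos ha] at hd
    rw [Real.dist_eq, sub_zero]
    have hpow : (0:ℝ) < a ^ (2 + c) := Real.rpow_pos_of_pos ha _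
    rw [abs_div, abs_of_pos hpow, div_lt_iff₀ hpow]
    have := hb a ha hd
    nlinarith
  -- g → 0 along 0+
  have hg0 : Tendsto g (nhdsWithin 0 (Ioi 0)) (nhds 0) := by
    rw [Metric.tendsto_nhdsWithin_nhds]
    intro ε hε
    obtain ⟨δ₁, hδ₁, hb₁⟩ := hfb (ε / 4) (by linarith)
    obtain ⟨δ₂, hδ₂, hb₂⟩ := hFb (ε / 4) (by linarith)
    refine ⟨min δ₁ δ₂, lt_min hδ₁ hδ₂, ?_⟩
    intro a ha hd
    have ha : (0:ℝ) < a := ha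
    rw [Real.dist_eq, sub_zero, abs_of_pos ha] at hd
    rw [Real.dist_eq, sub_zero]
    have h1 := hb₁ a ha (lt_of_lt_of_le hd (min_le_left _ _))
    have h2 := hb₂ a ha (lt_of_lt_of_le hd (min_le_right _ _))
    have hpow : (0:ℝ) < a ^ (2 + c) := Real.rpow_pos_of_pos ha _
    have e1 : |f a| * a ≤ ε / 4 * a ^ (2 + c) := by
      calc |f a| * a ≤ ε / 4 * a ^ (1 + c) * a := mul_le_mul_of_nonneg_right h1 ha.le
        _ = ε / 4 * a ^ (2 + c) := by
            rw [mul_assoc, ← Real.rpow_add_one ha.ne', show (1 + c + 1) = 2 + c by ring]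
    have key : |f a * a - 2 * F a| ≤ (3 * ε / 4) * a ^ (2 + c) := by
      have h4 : |f a * a - 2 * F a| ≤ |f a * a| + |2 * F a| := abs_sub _ _
      rw [abs_mul, abs_mul, abs_two, abs_of_pos ha] at h4
      linarith
    rw [hg]
    simp only
    rw [abs_of_pos ha, abs_div, abs_of_pos hpow, div_lt_iff₀ hpow]
    nlinarith
  -- g is positive on (0,∞)
  have hgpos : ∀ x : ℝ, 0 < x → 0 < g x := by
    intro x hx
    have hx2 : (0:ℝ) < x / 2 := by linarith
    have h1 : g (x / 2) < g x := hf4 (mem_Ioi.mpr hx2) (mem_Ioi.mpr hx) (by linarith)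
    have h2 : 0 ≤ g (x / 2) := by
      refine le_of_tendsto hg0 ?_
      filter_upwards [Ioo_mem_nhdsGT_of_mem (⟨le_refl 0, hx2⟩ : (0:ℝ) ∈ Ico 0 (x / 2))] with a ha
      exact (hf4 (mem_Ioi.mpr ha.1) (mem_Ioi.mpr hx2) ha.2).le
    linarith
  -- numerator positivity
  have hnum : ∀ x : ℝ, 0 < x → 0 < f x * x - 2 * F x := by
    intro x hx
    have h := hgpos x hx
    have hd : (0:ℝ) < |x| ^ (2 + c) := Real.rpow_pos_of_pos (abs_pos.mpr hx.ne') _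
    rw [hg] at h
    simp only at h
    rcases div_pos_iff.mp h with ⟨h1, _⟩ | ⟨_, h1⟩
    · exact h1
    · linarith
  -- derivative of F
  have hFd : ∀ x : ℝ, HasDerivAt F (f x) x := by
    intro x
    have hFe : F = fun u => ∫ τ in (0:ℝ)..u, f τ := funext hF
    rw [hFe]
    exact intervalIntegral.integral_hasDerivAt_right (hf.intervalIntegrable _ _)
      (hf.stronglyMeasurableAtFilter _ _) hf.continuousAt
  -- derivative of P = F s / s^2
  have hPd : ∀ x : ℝ, x ≠ 0 → HasDerivAt (fun s => F s / s ^ 2)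
      ((f x * x - 2 * F x) / x ^ 3) x := by
    intro x hx
    have h2 : HasDerivAt (fun s : ℝ => s ^ 2) (2 * x) x := by
      simpa using hasDerivAt_pow 2 x
    have h3 := (hFd x).div h2 (pow_ne_zero 2 hx)
    refine h3.congr_deriv (Eq.symm ?_)
    field_simp
  -- P → 0 along 0+
  have haC : Tendsto (fun a : ℝ => a ^ c) (nhdsWithin 0 (Ioi 0)) (nhds 0) := by
    have h := (Real.continuousAt_rpow_const 0 c (Or.inr hc.le)).tendsto
    rw [Real.zero_rpow hc.ne'] at h
    exact h.mono_left nhdsWithin_le_nhds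
  have hP0 : Tendsto (fun a => F a / a ^ 2) (nhdsWithin 0 (Ioi 0)) (nhds 0) := by
    have h := hFα.mul haC
    rw [zero_mul] at h
    refine h.congr' ?_
    filter_upwards [self_mem_nhdsWithin] with a ha
    have ha : (0:ℝ) < a := ha
    have hsplit : a ^ ((2:ℝ) + c) = a ^ (2:ℕ) * a ^ c := by
      rw [Real.rpow_add ha, show (2:ℝ) = ((2:ℕ):ℝ) by norm_num, Real.rpow_natCast]
    rw [hsplit]
    have h1 : a ^ c ≠ 0 := (Real.rpow_pos_of_pos ha c).ne'
    have h2 : a ^ (2:ℕ) ≠ 0 := pow_ne_zero 2 ha.ne'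
    field_simp
  -- P strictly monotone on (0,∞)
  have hPmono : StrictMonoOn (fun s => F s / s ^ 2) (Ioi 0) := by
    apply strictMonoOn_of_deriv_pos (convex_Ioi 0)
    · intro s hs
      exact ((hPd s (ne_of_gt hs)).differentiableAt.continuousAt).continuousWithinAt
    · intro s hs
      rw [interior_Ioi] at hs
      rw [(hPd s (ne_of_gt hs)).deriv]
      exact div_pos (hnum s hs) (pow_pos hs 3)
  have hFpos : ∀ t : ℝ, 0 < t → 0 < F t := by
    intro t ht
    have ht2 : (0:ℝ) < t / 2 := by linarith
    have h2 : 0 ≤ F (t / 2) / (t / 2) ^ 2 := by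
      refine le_of_tendsto hP0 ?_
      filter_upwards [Ioo_mem_nhdsGT_of_mem (⟨le_refl 0, ht2⟩ : (0:ℝ) ∈ Ico 0 (t / 2))] with a ha
      exact (hPmono (mem_Ioi.mpr ha.1) (mem_Ioi.mpr ht2) ha.2).le
    have h3 : F (t / 2) / (t / 2) ^ 2 < F t / t ^ 2 :=
      hPmono (mem_Ioi.mpr ht2) (mem_Ioi.mpr ht) (by linarith)
    have h4 : 0 < F t / t ^ 2 := lt_of_le_of_lt h2 h3
    have h5 := mul_pos h4 (pow_pos ht 2)
    rwa [div_mul_cancel₀ _ (pow_pos ht 2).ne'] at h5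
  intro t ht
  refine ⟨hFpos t ht, ?_⟩
  -- comparison function Q
  set Q : ℝ → ℝ := fun s => g t / c * s ^ c - F s / s ^ 2 with hQ
  have hQd : ∀ s : ℝ, 0 < s → HasDerivAt Q ((g t - g s) * s ^ (c - 1)) s := by
    intro s hs
    have h1 : HasDerivAt (fun x : ℝ => x ^ c) (c * s ^ (c - 1)) s :=
      Real.hasDerivAt_rpow_const (Or.inl hs.ne')
    have h2 := (h1.const_mul (g t / c)).sub (hPd s hs.ne')
    refine h2.congr_deriv (Eq.symm ?_)
    have hd : (0:ℝ) < s ^ ((2:ℝ) + c) := Real.rpow_pos_of_pos hs _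
    have hnumeq : f s * s - 2 * F s = g s * s ^ ((2:ℝ) + c) := by
      rw [hg]
      simp only
      rw [abs_of_pos hs]
      field_simp
    rw [hnumeq]
    have h3 : s ^ ((2:ℝ) + c) / s ^ (3:ℕ) = s ^ (c - 1) := by
      rw [← Real.rpow_natCast s 3, ← Real.rpow_sub hs]
      norm_num
      congr 1
      ring
    rw [mul_div_assoc, h3]
    field_simp
  have hQmono : StrictMonoOn Q (Ioc 0 t) := by
    apply strictMonoOn_of_deriv_pos (convex_Ioc 0 t)
    · intro s hs
      exact ((hQd s hs.1).differentiableAt.continuousAt).continuousWithinAt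
    · intro s hs
      rw [interior_Ioc] at hs
      rw [(hQd s hs.1).deriv]
      have hgs : g s < g t := hf4 (mem_Ioi.mpr hs.1) (mem_Ioi.mpr ht) hs.2
      exact mul_pos (by linarith) (Real.rpow_pos_of_pos hs.1 _)
  have hQ0 : Tendsto Q (nhdsWithin 0 (Ioi 0)) (nhds 0) := by
    have h2 := (haC.const_mul (g t / c)).sub hP0
    rw [mul_zero, sub_zero] at h2
    exact h2
  have ht2 : (0:ℝ) < t / 2 := by linarith
  have hq2 : 0 ≤ Q (t / 2) := by
    refine le_of_tendsto hQ0 ?_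
    filter_upwards [Ioo_mem_nhdsGT_of_mem (⟨le_refl 0, ht2⟩ : (0:ℝ) ∈ Ico 0 (t / 2))] with a ha
    exact (hQmono ⟨ha.1, by linarith [ha.2]⟩ ⟨ht2, by linarith⟩ ha.2).le
  have hq3 : Q (t / 2) < Q t := hQmono ⟨ht2, by linarith⟩ ⟨ht, le_refl t⟩ (by linarith)
  have hQt : 0 < Q t := lt_of_le_of_lt hq2 hq3
  rw [hQ] at hQt
  simp only at hQt
  have hgt : g t * t ^ c = (f t * t - 2 * F t) / t ^ 2 := by
    rw [hg]
    simp only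
    rw [abs_of_pos ht]
    have hsplit : t ^ ((2:ℝ) + c) = t ^ (2:ℕ) * t ^ c := by
      rw [Real.rpow_add ht, show (2:ℝ) = ((2:ℕ):ℝ) by norm_num, Real.rpow_natCast]
    rw [hsplit]
    have h1 : t ^ c ≠ 0 := (Real.rpow_pos_of_pos ht c).ne'
    have h2 : t ^ (2:ℕ) ≠ 0 := pow_ne_zero 2 ht.ne'
    field_simp
  have h5 : c * (F t / t ^ 2) < (f t * t - 2 * F t) / t ^ 2 := by
    rw [← hgt]
    have h6 : F t / t ^ 2 < g t / c * t ^ c := by linarith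
    calc c * (F t / t ^ 2) < c * (g t / c * t ^ c) := by
          exact mul_lt_mul_of_pos_left h6 hc
      _ = g t * t ^ c := by field_simp
  have hT2 : (0:ℝ) < t ^ 2 := pow_pos ht 2
  have h7 : c * F t < f t * t - 2 * F t := by
    rw [mul_div_assoc'] at h5
    exact (div_lt_div_iff_of_pos_right hT2).mp h5
  linarith
theorem stmt1 (N : ℕ) (hN : 1 ≤ N) (f : ℝ → ℝ) (hf : Continuous f)
    (F : ℝ → ℝ) (hF : ∀ t, F t = ∫ τ in (0:ℝ)..t, f τ)
    (hf1 : Tendsto (fun t => f t / |t| ^ (1 + 4 / (N:ℝ))) (nhdsWithin 0 {(0:ℝ)}ᶜ) (nhds 0))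
    (hf3 : Tendsto (fun t => F t / |t| ^ (2 + 4 / (N:ℝ)))
      (Filter.comap (fun t : ℝ => |t|) atTop) atTop)
    (hf4a : StrictAntiOn (fun t => (f t * t - 2 * F t) / |t| ^ (2 + 4 / (N:ℝ))) (Iio 0))
    (hf4b : StrictMonoOn (fun t => (f t * t - 2 * F t) / |t| ^ (2 + 4 / (N:ℝ))) (Ioi 0)) :
    ∀ t : ℝ, t ≠ 0 → (2 + 4 / (N:ℝ)) * F t > 0 ∧ f t * t > (2 + 4 / (N:ℝ)) * F t := by
  have hNpos : (0:ℝ) < (N:ℝ) := by exact_mod_cast Nat.lt_of_lt_of_le Nat.zero_lt_one hN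
  have hc : (0:ℝ) < 4 / (N:ℝ) := by positivity
  set c := 4 / (N:ℝ) with hcdef
  have h2c : (0:ℝ) < 2 + c := by linarith
  intro t ht
  rcases ht.lt_or_gt with htn | htp
  · -- t < 0 : reflection
    set f' : ℝ → ℝ := fun s => -f (-s) with hf'def
    set F' : ℝ → ℝ := fun s => F (-s) with hF'def
    have hf'cont : Continuous f' := (hf.comp continuous_neg).neg
    have hF' : ∀ s, F' s = ∫ τ in (0:ℝ)..s, f' τ := by
      intro s
      rw [hF'def, hf'def]
      simp only
      rw [intervalIntegral.integral_neg, intervalIntegral.integral_comp_neg f,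
        intervalIntegral.integral_symm, hF (-s)]
      norm_num
    have hnegmap : Tendsto (fun s : ℝ => -s) (nhdsWithin 0 {(0:ℝ)}ᶜ)
        (nhdsWithin 0 {(0:ℝ)}ᶜ) := by
      apply tendsto_nhdsWithin_of_tendsto_nhds_of_eventually_within
      · have h := (continuous_neg (G := ℝ)).tendsto 0
        rw [neg_zero] at h
        exact h.mono_left nhdsWithin_le_nhds
      · filter_upwards [self_mem_nhdsWithin] with x hx
        simp only [mem_compl_iff, mem_singleton_iff] at hx ⊢
        simpa using hx
    have hf1' : Tendsto (fun s => f' s / |s| ^ (1 + c)) (nhdsWithin 0 {(0:ℝ)}ᶜ) (nhds 0) := by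
      have h := (hf1.comp hnegmap).neg
      rw [neg_zero] at h
      refine h.congr ?_
      intro s
      simp only [Function.comp_apply, hf'def, abs_neg, neg_div]
    have hf4' : StrictMonoOn (fun s => (f' s * s - 2 * F' s) / |s| ^ (2 + c)) (Ioi 0) := by
      intro a ha b hb hab
      have ha' : -a ∈ Iio (0:ℝ) := by simpa using (mem_Ioi.mp ha)
      have hb' : -b ∈ Iio (0:ℝ) := by simpa using (mem_Ioi.mp hb)
      have key := hf4a hb' ha' (by simpa using hab)
      simp only at key ⊢
      have e : ∀ x : ℝ, (f' x * x - 2 * F' x) / |x| ^ (2 + c)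
          = (f (-x) * (-x) - 2 * F (-x)) / |(-x)| ^ (2 + c) := by
        intro x
        rw [hf'def, hF'def]
        simp only [abs_neg]
        ring_nf
      rw [e a, e b]
      exact key
    have h := aux_pos c hc f' hf'cont F' hF' hf1' hf4' (-t) (by linarith)
    obtain ⟨h1, h2⟩ := h
    have hFt : F' (-t) = F t := by rw [hF'def]; simp
    rw [hFt] at h1 h2
    have hft : f' (-t) * (-t) = f t * t := by rw [hf'def]; simp
    rw [hft] at h2
    exact ⟨mul_pos h2c h1, h2⟩
  · have h := aux_pos c hc f hf F hF hf1 hf4b t htp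
    exact ⟨mul_pos h2c h.1, h.2⟩
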